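/- The VH-curvature component (η, X) ↦ Curv(η^V, X^H) of the linearized connection D vanishes identically if and only if there exists a linear connection ∇ on the vector bundle π : E → M such that D is the pullback of ∇ by π; in that case Curv^∇(X,Y)σ = Curv(X^H, Y^H)σ for all X, Y ∈ 𝔛(M), σ ∈ Γ(E). -/

import Mathlib

noncomputable section

/-- Total space of the (locally trivialized) vector bundle `π : E = ℝⁿ × ℝᵐ → M = ℝⁿ`. -/
abbrev EE (n m : ℕ) := (Fin n → ℝ) × (Fin m → ℝ)

/-- The linearized covariant derivative `D_U s` on the pullback bundle `π*E → E` of the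
nonlinear connection with coefficients `Γ` (so `H_i = ∂/∂xⁱ - Γᴬᵢ ∂/∂uᴬ`); for a vector field
`U` on `E` and a section `s` of `π*E`, `D_U s = fderiv s (U) + Σᵢ Uⁱ (∂Γᵢ/∂u) (s)`. -/
def Dlin {n m : ℕ} (Γ : Fin n → EE n m → (Fin m → ℝ))
    (U : EE n m → EE n m) (s : EE n m → (Fin m → ℝ)) (p : EE n m) : Fin m → ℝ :=
  fderiv ℝ s p (U p) + ∑ i, (U p).1 i • fderiv ℝ (fun u => Γ i (p.1, u)) p.2 (s p)

/-- Vertical lift of a section `η` of `π*E`. -/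
def vl {n m : ℕ} (η : EE n m → (Fin m → ℝ)) (p : EE n m) : EE n m := (0, η p)

/-- Horizontal lift of a vector field `X` along `π` with respect to the nonlinear
connection `Γ`. -/
def hl {n m : ℕ} (Γ : Fin n → EE n m → (Fin m → ℝ)) (X : EE n m → (Fin n → ℝ))
    (p : EE n m) : EE n m := (X p, -(∑ i, X p i • Γ i p))

/-- Lie bracket of vector fields on `E`. -/
def lieBr {n m : ℕ} (U W : EE n m → EE n m) (p : EE n m) : EE n m :=
  fderiv ℝ W p (U p) - fderiv ℝ U p (W p)

/-- Curvature tensor of the linearized connection `D`. -/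
def Curv {n m : ℕ} (Γ : Fin n → EE n m → (Fin m → ℝ)) (U W : EE n m → EE n m)
    (s : EE n m → (Fin m → ℝ)) (p : EE n m) : Fin m → ℝ :=
  Dlin Γ U (Dlin Γ W s) p - Dlin Γ W (Dlin Γ U s) p - Dlin Γ (lieBr U W) s p

/-- Connector (vertical projection) of the nonlinear connection. -/
def kc {n m : ℕ} (Γ : Fin n → EE n m → (Fin m → ℝ)) (W : EE n m → EE n m)
    (p : EE n m) : Fin m → ℝ :=
  (W p).2 + ∑ i, (W p).1 i • Γ i p

/-- Covariant derivative of a linear connection `∇` on `E → M` with coefficient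
matrices `C i x`. -/
def nablaB {n m : ℕ} (C : Fin n → (Fin n → ℝ) → ((Fin m → ℝ) →L[ℝ] (Fin m → ℝ)))
    (X : (Fin n → ℝ) → (Fin n → ℝ)) (σ : (Fin n → ℝ) → (Fin m → ℝ)) (x : Fin n → ℝ) :
    Fin m → ℝ :=
  fderiv ℝ σ x (X x) + ∑ i, X x i • C i x (σ x)

/-- Lie bracket of vector fields on the base `M`. -/
def lieBase {n : ℕ} (X Y : (Fin n → ℝ) → (Fin n → ℝ)) (x : Fin n → ℝ) : Fin n → ℝ :=
  fderiv ℝ Y x (X x) - fderiv ℝ X x (Y x)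

/-- Curvature tensor of the linear connection `∇`. -/
def CurvNabla {n m : ℕ} (C : Fin n → (Fin n → ℝ) → ((Fin m → ℝ) →L[ℝ] (Fin m → ℝ)))
    (X Y : (Fin n → ℝ) → (Fin n → ℝ)) (σ : (Fin n → ℝ) → (Fin m → ℝ)) (x : Fin n → ℝ) :
    Fin m → ℝ :=
  nablaB C X (nablaB C Y σ) x - nablaB C Y (nablaB C X σ) x - nablaB C (lieBase X Y) σ x


open ContinuousLinearMap

variable {n m : ℕ}

/-- vertical partial derivative as a composition -/
lemma vpart {F : Type*} [NormedAddCommGroup F] [NormedSpace ℝ F]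
    (f : EE n m → F) (p : EE n m) (hf : DifferentiableAt ℝ f p) :
    fderiv ℝ (fun u => f (p.1, u)) p.2 = (fderiv ℝ f p).comp (inr ℝ (Fin n → ℝ) (Fin m → ℝ)) := by
  have h1 : HasFDerivAt (fun u : Fin m → ℝ => (p.1, u)) (inr ℝ (Fin n → ℝ) (Fin m → ℝ)) p.2 :=
    hasFDerivAt_prodMk_right p.1 p.2
  have h2 : HasFDerivAt f (fderiv ℝ f p) ((p.1, p.2) : EE n m) := by
    rw [Prod.mk.eta]; exact hf.hasFDerivAt
  exact (h2.comp p.2 h1).fderiv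

/-- vertical fiber derivative of `Γ i` as a CLM-valued map -/
def Mv (Γ : Fin n → EE n m → (Fin m → ℝ)) (i : Fin n) (q : EE n m) :
    (Fin m → ℝ) →L[ℝ] (Fin m → ℝ) :=
  (fderiv ℝ (Γ i) q).comp (inr ℝ (Fin n → ℝ) (Fin m → ℝ))

lemma contDiff_Mv (Γ : Fin n → EE n m → (Fin m → ℝ)) (hΓ : ∀ i, ContDiff ℝ (⊤ : ℕ∞) (Γ i))
    (i : Fin n) : ContDiff ℝ (⊤ : ℕ∞) (Mv Γ i) := by
  have h1 : ContDiff ℝ (⊤ : ℕ∞) (fderiv ℝ (Γ i)) :=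
    (hΓ i).fderiv_right (by simp)
  exact h1.clm_comp contDiff_const

section Helpers
variable {Γ : Fin n → EE n m → (Fin m → ℝ)} (hΓ : ∀ i, ContDiff ℝ (⊤ : ℕ∞) (Γ i))

include hΓ in
lemma Dlin_eq (U : EE n m → EE n m) (s : EE n m → (Fin m → ℝ)) (p : EE n m) :
    Dlin Γ U s p = fderiv ℝ s p (U p) + ∑ i, (U p).1 i • Mv Γ i p (s p) := by
  unfold Dlin
  congr 1
  refine Finset.sum_congr rfl fun i _ => ?_
  rw [vpart (Γ i) p (((hΓ i).differentiable (by simp)) p)]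
  rfl

lemma Dlin_vl (η s : EE n m → (Fin m → ℝ)) (p : EE n m) :
    Dlin Γ (vl η) s p = fderiv ℝ s p (0, η p) := by
  simp [Dlin, vl]


lemma fderiv_vl_eq {η : EE n m → (Fin m → ℝ)} {p : EE n m} (hη : DifferentiableAt ℝ η p)
    (w : EE n m) : fderiv ℝ (vl η) p w = (0, fderiv ℝ η p w) := by
  have : HasFDerivAt (vl η) (((0 : EE n m →L[ℝ] (Fin n → ℝ))).prod (fderiv ℝ η p)) p :=
    (hasFDerivAt_const (0 : Fin n → ℝ) p).prodMk hη.hasFDerivAt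
  rw [this.fderiv]; rfl

include hΓ in
lemma contDiff_hl {X : EE n m → (Fin n → ℝ)} (hX : ContDiff ℝ (⊤ : ℕ∞) X) :
    ContDiff ℝ (⊤ : ℕ∞) (hl Γ X) := by
  apply hX.prodMk
  exact (ContDiff.sum fun i _ => ((contDiff_pi.mp hX i).smul (hΓ i))).neg

include hΓ in
lemma fderiv_hl_fst {X : EE n m → (Fin n → ℝ)} (hX : ContDiff ℝ (⊤ : ℕ∞) X) (p : EE n m)
    (w : EE n m) : (fderiv ℝ (hl Γ X) p w).1 = fderiv ℝ X p w := by
  have hg : DifferentiableAt ℝ (fun q => -(∑ i, X q i • Γ i q)) p :=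
    (((ContDiff.sum fun i _ => ((contDiff_pi.mp hX i).smul (hΓ i))).neg).differentiable
      (by simp) p)
  have hX' : DifferentiableAt ℝ X p := (hX.differentiable (by simp) p)
  have : HasFDerivAt (hl Γ X) ((fderiv ℝ X p).prod (fderiv ℝ (fun q => -(∑ i, X q i • Γ i q)) p)) p :=
    hX'.hasFDerivAt.prodMk hg.hasFDerivAt
  rw [this.fderiv]; rfl

lemma fderiv_pi_apply {X : EE n m → (Fin n → ℝ)} {p : EE n m} (hX : DifferentiableAt ℝ X p)
    (i : Fin n) (w : EE n m) : fderiv ℝ (fun q => X q i) p w = fderiv ℝ X p w i := by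
  have : HasFDerivAt (fun q => X q i)
      ((ContinuousLinearMap.proj i).comp (fderiv ℝ X p)) p :=
    (ContinuousLinearMap.proj (R := ℝ) (φ := fun _ : Fin n => ℝ) i).hasFDerivAt.comp p
      hX.hasFDerivAt
  rw [this.fderiv]; rfl

include hΓ in
lemma Mv_vert_zero {C : Fin n → (Fin n → ℝ) → ((Fin m → ℝ) →L[ℝ] (Fin m → ℝ))}
    (HC : ∀ (i : Fin n) (q : EE n m), Mv Γ i q = C i q.1)
    (i : Fin n) (p : EE n m) (v : Fin m → ℝ) :
    fderiv ℝ (Mv Γ i) p ((0 : Fin n → ℝ), v) = 0 := by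
  have hMd : DifferentiableAt ℝ (Mv Γ i) p :=
    ((contDiff_Mv Γ hΓ i).differentiable (by simp) p)
  have h1 : fderiv ℝ (fun u => Mv Γ i (p.1, u)) p.2
      = (fderiv ℝ (Mv Γ i) p).comp (inr ℝ (Fin n → ℝ) (Fin m → ℝ)) := vpart _ p hMd
  have h2 : (fun u => Mv Γ i (p.1, u)) = fun _ => C i p.1 := by
    funext u; exact HC i (p.1, u)
  have h3 : fderiv ℝ (fun u => Mv Γ i (p.1, u)) p.2 = 0 := by rw [h2]; exact fderiv_const_apply _
  have := congrArg (fun (L : (Fin m → ℝ) →L[ℝ] ((Fin m → ℝ) →L[ℝ] (Fin m → ℝ))) => L v) h1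
  simp only [h3] at this
  simpa using this.symm

include hΓ in
lemma backward_vanish {C : Fin n → (Fin n → ℝ) → ((Fin m → ℝ) →L[ℝ] (Fin m → ℝ))}
    (HC : ∀ (i : Fin n) (q : EE n m), Mv Γ i q = C i q.1)
    (η s : EE n m → (Fin m → ℝ)) (X : EE n m → (Fin n → ℝ))
    (hη : ContDiff ℝ (⊤ : ℕ∞) η) (hs : ContDiff ℝ (⊤ : ℕ∞) s)
    (hX : ContDiff ℝ (⊤ : ℕ∞) X) (p : EE n m) :
    Curv Γ (vl η) (hl Γ X) s p = 0 := by
  set H := hl Γ X with hHdef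
  have hsd : Differentiable ℝ s := hs.differentiable (by simp)
  have hs' : ContDiff ℝ (⊤ : ℕ∞) (fderiv ℝ s) := hs.fderiv_right (by simp)
  have hs'd : Differentiable ℝ (fderiv ℝ s) := hs'.differentiable (by simp)
  have hXd : Differentiable ℝ X := hX.differentiable (by simp)
  have hXi : ∀ i, Differentiable ℝ (fun q => X q i) := fun i =>
    (contDiff_pi.mp hX i).differentiable (by simp)
  have hηd : Differentiable ℝ η := hη.differentiable (by simp)
  have hHd : Differentiable ℝ H := (contDiff_hl hΓ hX).differentiable (by simp)
  have hMd : ∀ i, Differentiable ℝ (Mv Γ i) := fun i =>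
    (contDiff_Mv Γ hΓ i).differentiable (by simp)
  have hvld : Differentiable ℝ (vl η) :=
    (differentiable_const (0 : Fin n → ℝ)).prodMk hηd
  set Vp : EE n m := ((0 : Fin n → ℝ), η p) with hVp
  have eDHs : Dlin Γ H s = fun q => fderiv ℝ s q (H q) + ∑ i, X q i • Mv Γ i q (s q) := by
    funext q; rw [Dlin_eq hΓ]; rfl
  have eDVs : Dlin Γ (vl η) s = fun q => fderiv ℝ s q (vl η q) := by
    funext q; rw [Dlin_vl]; rfl
  have hA : DifferentiableAt ℝ (fun q => fderiv ℝ s q (H q)) p := (hs'd.clm_apply hHd) p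
  have hBi : ∀ i, DifferentiableAt ℝ (fun q => X q i • Mv Γ i q (s q)) p := fun i =>
    (hXi i p).smul ((hMd i p).clm_apply (hsd p))
  have e2 : fderiv ℝ (fun q => fderiv ℝ s q (H q)) p
      = (fderiv ℝ s p).comp (fderiv ℝ H p) + (fderiv ℝ (fderiv ℝ s) p).flip (H p) :=
    fderiv_clm_apply (hs'd p) (hHd p)
  have e5 : ∀ i, fderiv ℝ (fun q => Mv Γ i q (s q)) p
      = (Mv Γ i p).comp (fderiv ℝ s p) + (fderiv ℝ (Mv Γ i) p).flip (s p) := fun i =>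
    fderiv_clm_apply (hMd i p) (hsd p)
  have e4 : ∀ i, fderiv ℝ (fun q => X q i • Mv Γ i q (s q)) p
      = X p i • fderiv ℝ (fun q => Mv Γ i q (s q)) p
        + (fderiv ℝ (fun q => X q i) p).smulRight (Mv Γ i p (s p)) := fun i =>
    fderiv_smul (hXi i p) ((hMd i p).clm_apply (hsd p))
  have hMv0 : ∀ i, fderiv ℝ (Mv Γ i) p Vp = 0 := fun i => Mv_vert_zero hΓ HC i p (η p)
  have hXip : ∀ i, fderiv ℝ (fun q => X q i) p Vp = fderiv ℝ X p Vp i := fun i =>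
    fderiv_pi_apply (hXd p) i Vp
  have T1 : Dlin Γ (vl η) (Dlin Γ H s) p
      = fderiv ℝ s p (fderiv ℝ H p Vp) + fderiv ℝ (fderiv ℝ s) p Vp (H p)
        + (∑ i, X p i • Mv Γ i p (fderiv ℝ s p Vp)
           + ∑ i, fderiv ℝ X p Vp i • Mv Γ i p (s p)) := by
    rw [Dlin_vl, eDHs,
      fderiv_fun_add hA (DifferentiableAt.fun_sum fun i _ => hBi i),
      fderiv_fun_sum (fun i _ => hBi i), e2, ← hVp]
    simp only [ContinuousLinearMap.add_apply, ContinuousLinearMap.coe_comp', Function.comp_apply,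
      ContinuousLinearMap.flip_apply, ContinuousLinearMap.sum_apply, e4, e5,
      ContinuousLinearMap.smul_apply, ContinuousLinearMap.smulRight_apply, hMv0, hXip,
      ContinuousLinearMap.zero_apply, smul_zero, add_zero, smul_add]
    rw [Finset.sum_add_distrib]
  have T2 : Dlin Γ H (Dlin Γ (vl η) s) p
      = fderiv ℝ s p ((0 : Fin n → ℝ), fderiv ℝ η p (H p))
          + fderiv ℝ (fderiv ℝ s) p (H p) Vp
        + ∑ i, X p i • Mv Γ i p (fderiv ℝ s p Vp) := by
    rw [Dlin_eq hΓ, eDVs, fderiv_clm_apply (hs'd p) (hvld p)]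
    simp only [ContinuousLinearMap.add_apply, ContinuousLinearMap.coe_comp', Function.comp_apply,
      ContinuousLinearMap.flip_apply, fderiv_vl_eq (hηd p)]
    rfl
  have T3 : Dlin Γ (lieBr (vl η) H) s p
      = fderiv ℝ s p (fderiv ℝ H p Vp - ((0 : Fin n → ℝ), fderiv ℝ η p (H p)))
        + ∑ i, fderiv ℝ X p Vp i • Mv Γ i p (s p) := by
    rw [Dlin_eq hΓ]
    have hb : lieBr (vl η) H p = fderiv ℝ H p Vp - ((0 : Fin n → ℝ), fderiv ℝ η p (H p)) := by
      unfold lieBr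
      rw [fderiv_vl_eq (hηd p)]
      rfl
    rw [hb]
    congr 1
    refine Finset.sum_congr rfl fun i _ => ?_
    congr 2
    have h1 : (fderiv ℝ H p Vp).1 = fderiv ℝ X p Vp := fderiv_hl_fst hΓ hX p Vp
    simp [h1]
  have sym : fderiv ℝ (fderiv ℝ s) p Vp (H p) = fderiv ℝ (fderiv ℝ s) p (H p) Vp :=
    second_derivative_symmetric (fun y => (hsd y).hasFDerivAt) ((hs'd p).hasFDerivAt) _ _
  unfold Curv
  rw [T1, T2, T3, sym, map_sub]
  abel

include hΓ in
lemma curv_const (i : Fin n) (v w : Fin m → ℝ) (q : EE n m) :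
    Curv Γ (vl (fun _ => v)) (hl Γ (fun _ => Pi.single i (1:ℝ))) (fun _ => w) q
      = fderiv ℝ (fun q' => Mv Γ i q' w) q ((0 : Fin n → ℝ), v) := by
  set Xc : EE n m → (Fin n → ℝ) := fun _ => Pi.single i (1:ℝ) with hXc
  set H := hl Γ Xc with hH
  have eH : Dlin Γ H (fun _ => w) = fun q' => Mv Γ i q' w := by
    funext q'
    rw [Dlin_eq hΓ]
    simp [fderiv_const, hH, hl, hXc, Pi.single_apply, ite_smul, zero_smul, one_smul, Finset.sum_ite_eq']
  have eV : Dlin Γ (vl (fun _ => v)) (fun _ => w) = fun _ => (0 : Fin m → ℝ) := by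
    funext q'
    rw [Dlin_vl]
    simp [fderiv_const]
  have T2 : Dlin Γ H (fun _ => (0 : Fin m → ℝ)) q = 0 := by
    rw [Dlin_eq hΓ]
    simp [fderiv_const]
  have T3 : Dlin Γ (lieBr (vl (fun _ => v)) H) (fun _ => w) q = 0 := by
    rw [Dlin_eq hΓ]
    have h1 : (lieBr (vl (fun _ => v)) H q).1 = 0 := by
      unfold lieBr
      have hv : fderiv ℝ (vl (fun _ : EE n m => v)) q = 0 := by
        have : vl (fun _ : EE n m => v) = fun _ => ((0 : Fin n → ℝ), v) := rfl
        rw [this]; exact fderiv_const_apply _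
      have hh : (fderiv ℝ H q (vl (fun _ => v) q)).1 = 0 := by
        rw [fderiv_hl_fst hΓ contDiff_const q]
        simp [fderiv_fun_const]
      simp [hv, hh]
    rw [h1]
    simp [fderiv_fun_const]
  unfold Curv
  rw [eH, eV, T2, T3, Dlin_vl]
  simp

include hΓ in
lemma forward_const (hvan : ∀ (η s : EE n m → (Fin m → ℝ)) (X : EE n m → (Fin n → ℝ)),
      ContDiff ℝ (⊤ : ℕ∞) η → ContDiff ℝ (⊤ : ℕ∞) s → ContDiff ℝ (⊤ : ℕ∞) X →
      ∀ p : EE n m, Curv Γ (vl η) (hl Γ X) s p = 0)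
    (i : Fin n) (p : EE n m) : Mv Γ i p = Mv Γ i (p.1, 0) := by
  have hMd : Differentiable ℝ (Mv Γ i) :=
    (contDiff_Mv Γ hΓ i).differentiable (by simp)
  have step2 : ∀ (q : EE n m) (v : Fin m → ℝ),
      fderiv ℝ (Mv Γ i) q ((0 : Fin n → ℝ), v) = 0 := by
    intro q v
    refine ContinuousLinearMap.ext fun w' => ?_
    have h0 : fderiv ℝ (fun q' => Mv Γ i q' w') q ((0 : Fin n → ℝ), v) = 0 := by
      rw [← curv_const hΓ i v w' q]
      exact hvan _ _ _ contDiff_const contDiff_const contDiff_const q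
    have h1 : fderiv ℝ (fun q' => Mv Γ i q' w') q
        = (Mv Γ i q).comp (fderiv ℝ (fun _ : EE n m => w') q)
          + (fderiv ℝ (Mv Γ i) q).flip w' :=
      fderiv_clm_apply (hMd q) (differentiableAt_const w')
    rw [h1] at h0
    simpa [fderiv_const] using h0
  have hdh : Differentiable ℝ (fun u => Mv Γ i (p.1, u)) :=
    hMd.comp ((differentiable_const p.1).prodMk differentiable_id)
  have hzero : ∀ u, fderiv ℝ (fun u' => Mv Γ i (p.1, u')) u = 0 := by
    intro u
    have := vpart (n := n) (m := m) (Mv Γ i) (p.1, u) (hMd (p.1, u))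
    rw [this]
    refine ContinuousLinearMap.ext fun v => ?_
    simp only [ContinuousLinearMap.comp_apply, ContinuousLinearMap.inr_apply,
      ContinuousLinearMap.zero_apply]
    exact step2 (p.1, u) v
  have := is_const_of_fderiv_eq_zero hdh hzero p.2 0
  simpa using this

lemma fderiv_base_comp {F : Type*} [NormedAddCommGroup F] [NormedSpace ℝ F]
    {f : (Fin n → ℝ) → F} {p : EE n m} (hf : DifferentiableAt ℝ f p.1) :
    fderiv ℝ (fun q : EE n m => f q.1) p
      = (fderiv ℝ f p.1).comp (ContinuousLinearMap.fst ℝ (Fin n → ℝ) (Fin m → ℝ)) :=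
  (hf.hasFDerivAt.comp p hasFDerivAt_fst).fderiv

include hΓ in
lemma basic_section {C : Fin n → (Fin n → ℝ) → ((Fin m → ℝ) →L[ℝ] (Fin m → ℝ))}
    (HC : ∀ (i : Fin n) (q : EE n m), Mv Γ i q = C i q.1)
    (X : (Fin n → ℝ) → (Fin n → ℝ)) (τ : (Fin n → ℝ) → (Fin m → ℝ)) (p : EE n m)
    (hτ : DifferentiableAt ℝ τ p.1) :
    Dlin Γ (hl Γ (fun q => X q.1)) (fun q => τ q.1) p = nablaB C X τ p.1 := by
  rw [Dlin_eq hΓ, fderiv_base_comp hτ]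
  unfold nablaB
  congr 1
  refine Finset.sum_congr rfl fun i _ => ?_
  rw [HC i p]
  rfl

include hΓ in
lemma contDiff_nablaB {C : Fin n → (Fin n → ℝ) → ((Fin m → ℝ) →L[ℝ] (Fin m → ℝ))}
    (HC : ∀ (i : Fin n) (q : EE n m), Mv Γ i q = C i q.1)
    {X : (Fin n → ℝ) → (Fin n → ℝ)} {σ : (Fin n → ℝ) → (Fin m → ℝ)}
    (hX : ContDiff ℝ (⊤ : ℕ∞) X) (hσ : ContDiff ℝ (⊤ : ℕ∞) σ) :
    ContDiff ℝ (⊤ : ℕ∞) (nablaB C X σ) := by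
  have hC : ∀ i, (fun x => C i x) = fun x => Mv Γ i ((x, (0 : Fin m → ℝ)) : EE n m) := by
    intro i; funext x; exact (HC i (x, 0)).symm
  unfold nablaB
  apply ContDiff.add
  · exact ((hσ.fderiv_right (by simp)).clm_apply hX)
  · refine ContDiff.sum fun i _ => ?_
    refine (contDiff_pi.mp hX i).smul ?_
    have : ContDiff ℝ (⊤ : ℕ∞) (fun x => C i x) := by
      rw [hC i]
      exact (contDiff_Mv Γ hΓ i).comp (contDiff_id.prodMk contDiff_const)
    exact this.clm_apply hσ

include hΓ in
lemma part2 {C : Fin n → (Fin n → ℝ) → ((Fin m → ℝ) →L[ℝ] (Fin m → ℝ))}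
    (HC : ∀ (i : Fin n) (q : EE n m), Mv Γ i q = C i q.1)
    (X Y : (Fin n → ℝ) → (Fin n → ℝ)) (σ : (Fin n → ℝ) → (Fin m → ℝ))
    (hX : ContDiff ℝ (⊤ : ℕ∞) X) (hY : ContDiff ℝ (⊤ : ℕ∞) Y)
    (hσ : ContDiff ℝ (⊤ : ℕ∞) σ) (p : EE n m) :
    CurvNabla C X Y σ p.1
      = Curv Γ (hl Γ fun q => X q.1) (hl Γ fun q => Y q.1) (fun q => σ q.1) p := by
  have hXl : ContDiff ℝ (⊤ : ℕ∞) (fun q : EE n m => X q.1) := hX.comp contDiff_fst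
  have hYl : ContDiff ℝ (⊤ : ℕ∞) (fun q : EE n m => Y q.1) := hY.comp contDiff_fst
  have hσd : Differentiable ℝ σ := hσ.differentiable (by simp)
  have hXd : Differentiable ℝ X := hX.differentiable (by simp)
  have hYd : Differentiable ℝ Y := hY.differentiable (by simp)
  have eY : Dlin Γ (hl Γ fun q => Y q.1) (fun q => σ q.1) = fun q => nablaB C Y σ q.1 :=
    funext fun q => basic_section hΓ HC Y σ q (hσd q.1)
  have eX : Dlin Γ (hl Γ fun q => X q.1) (fun q => σ q.1) = fun q => nablaB C X σ q.1 :=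
    funext fun q => basic_section hΓ HC X σ q (hσd q.1)
  have e1 : Dlin Γ (hl Γ fun q => X q.1) (fun q => nablaB C Y σ q.1) p
      = nablaB C X (nablaB C Y σ) p.1 :=
    basic_section hΓ HC X (nablaB C Y σ) p
      (((contDiff_nablaB hΓ HC hY hσ).differentiable (by simp)) p.1)
  have e2 : Dlin Γ (hl Γ fun q => Y q.1) (fun q => nablaB C X σ q.1) p
      = nablaB C Y (nablaB C X σ) p.1 :=
    basic_section hΓ HC Y (nablaB C X σ) p
      (((contDiff_nablaB hΓ HC hX hσ).differentiable (by simp)) p.1)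
  have hfst : (lieBr (hl Γ fun q => X q.1) (hl Γ fun q => Y q.1) p).1
      = lieBase X Y p.1 := by
    unfold lieBr lieBase
    have h1 : (fderiv ℝ (hl Γ fun q => Y q.1) p (hl Γ (fun q => X q.1) p)).1
        = fderiv ℝ Y p.1 (X p.1) := by
      rw [fderiv_hl_fst hΓ hYl p, fderiv_base_comp (hYd p.1)]
      rfl
    have h2 : (fderiv ℝ (hl Γ fun q => X q.1) p (hl Γ (fun q => Y q.1) p)).1
        = fderiv ℝ X p.1 (Y p.1) := by
      rw [fderiv_hl_fst hΓ hXl p, fderiv_base_comp (hXd p.1)]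
      rfl
    simp [h1, h2]
  have e3 : Dlin Γ (lieBr (hl Γ fun q => X q.1) (hl Γ fun q => Y q.1)) (fun q => σ q.1) p
      = nablaB C (lieBase X Y) σ p.1 := by
    rw [Dlin_eq hΓ, fderiv_base_comp (hσd p.1)]
    unfold nablaB
    congr 1
    · simp only [ContinuousLinearMap.coe_comp', Function.comp_apply]
      rw [← hfst]
      rfl
    · refine Finset.sum_congr rfl fun i _ => ?_
      rw [HC i p, hfst]
  unfold Curv CurvNabla
  rw [eY, eX, e1, e2, e3]

end Helpers

/-- The VH-component `(η, X) ↦ Curv(η^V, X^H)` of the curvature of the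
linearized connection `D` vanishes identically iff there is a linear connection `∇` on
`E → M` (with coefficients `C`) such that `D` is the pullback of `∇` by `π`; in that case
`Curv^∇(X,Y)σ = Curv(X^H,Y^H)σ` for basic data. -/
theorem curvature_VH_vanishes_iff_pullback {n m : ℕ}
    (Γ : Fin n → EE n m → (Fin m → ℝ)) (hΓ : ∀ i, ContDiff ℝ (⊤ : ℕ∞) (Γ i)) :
    ((∀ (η s : EE n m → (Fin m → ℝ)) (X : EE n m → (Fin n → ℝ)),
        ContDiff ℝ (⊤ : ℕ∞) η → ContDiff ℝ (⊤ : ℕ∞) s → ContDiff ℝ (⊤ : ℕ∞) X →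
        ∀ p : EE n m, Curv Γ (vl η) (hl Γ X) s p = 0) ↔
      (∃ C : Fin n → (Fin n → ℝ) → ((Fin m → ℝ) →L[ℝ] (Fin m → ℝ)),
        ∀ (i : Fin n) (p : EE n m),
          fderiv ℝ (fun u => Γ i (p.1, u)) p.2 = C i p.1)) ∧
    (∀ C : Fin n → (Fin n → ℝ) → ((Fin m → ℝ) →L[ℝ] (Fin m → ℝ)),
      (∀ (i : Fin n) (p : EE n m), fderiv ℝ (fun u => Γ i (p.1, u)) p.2 = C i p.1) →
      ∀ (X Y : (Fin n → ℝ) → (Fin n → ℝ)) (σ : (Fin n → ℝ) → (Fin m → ℝ)),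
        ContDiff ℝ (⊤ : ℕ∞) X → ContDiff ℝ (⊤ : ℕ∞) Y → ContDiff ℝ (⊤ : ℕ∞) σ →
        ∀ p : EE n m,
          CurvNabla C X Y σ p.1
            = Curv Γ (hl Γ fun q => X q.1) (hl Γ fun q => Y q.1) (fun q => σ q.1) p) := by
  have hΓd : ∀ i, Differentiable ℝ (Γ i) := fun i =>
    (hΓ i).differentiable (by simp)
  have key : ∀ (i : Fin n) (p : EE n m),
      fderiv ℝ (fun u => Γ i (p.1, u)) p.2 = Mv Γ i p := fun i p =>
    vpart (Γ i) p (hΓd i p)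
  constructor
  · constructor
    · intro hvan
      refine ⟨fun i x => Mv Γ i ((x, 0) : EE n m), fun i p => ?_⟩
      rw [key i p]
      exact forward_const hΓ hvan i p
    · rintro ⟨C, hC⟩ η s X hη hs hX p
      exact backward_vanish hΓ (C := C)
        (fun i q => by rw [← key i q]; exact hC i q) η s X hη hs hX p
  · intro C hC X Y σ hX hY hσ p
    exact part2 hΓ (fun i q => by rw [← key i q]; exact hC i q) X Y σ hX hY hσ p
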